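/- If (X,d) is a complete metric space, then (X,d_0) is complete, where d_0(p,q) = sup_{ε>0} d_ε(p,q) (restricting to the values where d_0 is finite, i.e., every d_0-Cauchy sequence d_0-converges to a point of X). -/

import Mathlib

open Filter Set
open scoped ENNReal

variable {X : Type*}

/-- The length of the chain `x 0, x 1, …, x n` with respect to the distance `ρ`. -/
noncomputable def chainLengthOf (ρ : X → X → ℝ≥0∞) (x : ℕ → X) (n : ℕ) : ℝ≥0∞ :=
  ∑ k ∈ Finset.range n, ρ (x k) (x (k + 1))

/-- `x 0, …, x n` is an `ε`-chain from `p` to `q` with respect to `ρ`. -/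
def IsChainOf (ρ : X → X → ℝ≥0∞) (ε : ℝ≥0∞) (p q : X) (x : ℕ → X) (n : ℕ) : Prop :=
  x 0 = p ∧ x n = q ∧ ∀ k < n, ρ (x k) (x (k + 1)) ≤ ε

/-- `d_ε`: the infimum of lengths of `ε`-chains joining `p` to `q`. -/
noncomputable def chainDistOf (ρ : X → X → ℝ≥0∞) (ε : ℝ≥0∞) (p q : X) : ℝ≥0∞ :=
  ⨅ (n : ℕ) (x : ℕ → X) (_ : IsChainOf ρ ε p q x n), chainLengthOf ρ x n

/-- `d_0 = sup_{ε > 0} d_ε`. -/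
noncomputable def chainMetricOf (ρ : X → X → ℝ≥0∞) (p q : X) : ℝ≥0∞ :=
  ⨆ (ε : ℝ≥0∞) (_ : 0 < ε), chainDistOf ρ ε p q

/-- `d_ε` for a metric space, with `ρ = edist`. -/
noncomputable def chainDist [PseudoEMetricSpace X] (ε : ℝ≥0∞) (p q : X) : ℝ≥0∞ :=
  chainDistOf (fun a b => edist a b) ε p q

/-- `d_0` for a metric space, with `ρ = edist`. -/
noncomputable def chainMetric [PseudoEMetricSpace X] (p q : X) : ℝ≥0∞ :=
  chainMetricOf (fun a b => edist a b) p q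

/-- The length of a path `γ : [0,1] → X` with respect to `ρ`:
the supremum over partitions `0 = t 0 ≤ t 1 ≤ … ≤ t n = 1` of the partition sums. -/
noncomputable def pathLengthOf (ρ : X → X → ℝ≥0∞) (γ : ℝ → X) : ℝ≥0∞ :=
  ⨆ (n : ℕ) (t : ℕ → ℝ) (_ : t 0 = 0 ∧ t n = 1 ∧ Monotone t),
    ∑ k ∈ Finset.range n, ρ (γ (t k)) (γ (t (k + 1)))

noncomputable def pathLength [PseudoEMetricSpace X] (γ : ℝ → X) : ℝ≥0∞ :=
  pathLengthOf (fun a b => edist a b) γ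

/-- Continuity of a path `γ` on `[0,1]` with respect to the distance `ρ`. -/
def ContinuousWrt (ρ : X → X → ℝ≥0∞) (γ : ℝ → X) : Prop :=
  ∀ t ∈ Icc (0 : ℝ) 1,
    Tendsto (fun s => ρ (γ s) (γ t)) (nhdsWithin t (Icc (0 : ℝ) 1)) (nhds 0)

/-- The induced length metric with respect to `ρ`: the infimum of `ρ`-lengths of
`ρ`-continuous paths joining `p` to `q`. -/
noncomputable def lengthMetricOf (ρ : X → X → ℝ≥0∞) (p q : X) : ℝ≥0∞ :=
  ⨅ (γ : ℝ → X) (_ : ContinuousWrt ρ γ ∧ γ 0 = p ∧ γ 1 = q), pathLengthOf ρ γ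

/-- The induced length metric `d̄` of a metric space. -/
noncomputable def lengthMetric [PseudoEMetricSpace X] (p q : X) : ℝ≥0∞ :=
  lengthMetricOf (fun a b => edist a b) p q

lemma edist_le_chainDist {Y : Type*} [PseudoEMetricSpace Y] (ε : ℝ≥0∞) (p q : Y) : edist p q ≤ chainDist ε p q := by
  refine le_iInf fun n => le_iInf fun y => le_iInf fun h => ?_
  calc edist p q = edist (y 0) (y n) := by rw [h.1, h.2.1]
    _ ≤ ∑ k ∈ Finset.range n, edist (y k) (y (k+1)) := edist_le_range_sum_edist y n
    _ = chainLengthOf (fun a b => edist a b) y n := rfl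

lemma chainDist_le_edist {Y : Type*} [PseudoEMetricSpace Y] {ε : ℝ≥0∞} {p q : Y} (h : edist p q ≤ ε) :
    chainDist ε p q ≤ edist p q := by
  have : chainDist ε p q ≤ chainLengthOf (fun a b => edist a b)
      (fun k => if k = 0 then p else q) 1 := by
    refine iInf_le_of_le 1 (iInf_le_of_le _ (iInf_le_of_le ?_ le_rfl))
    refine ⟨rfl, rfl, fun k hk => ?_⟩
    interval_cases k
    simpa using h
  simpa [chainLengthOf] using this

lemma chainDist_triangle {Y : Type*} [PseudoEMetricSpace Y] (ε : ℝ≥0∞) (p q r : Y) :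
    chainDist ε p q ≤ chainDist ε p r + chainDist ε r q := by
  have key : ∀ (n : ℕ) (y : ℕ → Y), IsChainOf (fun a b => edist a b) ε p r y n →
      ∀ (m : ℕ) (z : ℕ → Y), IsChainOf (fun a b => edist a b) ε r q z m →
      chainDist ε p q ≤ chainLengthOf (fun a b => edist a b) y n +
        chainLengthOf (fun a b => edist a b) z m := by
    intro n y hy m z hz
    set w : ℕ → Y := fun k => if k < n then y k else z (k - n) with hw
    have hwn : ∀ k ≤ n, w k = y k := by
      intro k hk
      rcases lt_or_eq_of_le hk with h | h
      · simp [hw, h]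
      · subst h; simp [hw, hy.2.1, hz.1]
    have hwz : ∀ k, w (n + k) = z k := by
      intro k
      rcases Nat.eq_zero_or_pos k with h | h
      · subst h; simpa using hwn n le_rfl |>.trans (hy.2.1.trans hz.1.symm)
      · simp [hw, Nat.not_lt.2 (Nat.le_add_right n k), Nat.add_sub_cancel_left]
    have hchain : IsChainOf (fun a b => edist a b) ε p q w (n + m) := by
      refine ⟨(hwn 0 (Nat.zero_le n)).trans hy.1, (hwz m).trans hz.2.1, fun k hk => ?_⟩
      rcases Nat.lt_or_ge k n with h | h
      · rw [hwn k h.le, hwn (k+1) h]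
        exact hy.2.2 k h
      · obtain ⟨j, rfl⟩ := Nat.exists_eq_add_of_le h
        rw [hwz j, show n + j + 1 = n + (j + 1) from rfl, hwz (j+1)]
        exact hz.2.2 j (by omega)
    have hlen : chainLengthOf (fun a b => edist a b) w (n + m) =
        chainLengthOf (fun a b => edist a b) y n +
        chainLengthOf (fun a b => edist a b) z m := by
      unfold chainLengthOf
      rw [Finset.sum_range_add]
      congr 1
      · refine Finset.sum_congr rfl fun k hk => ?_
        rw [Finset.mem_range] at hk
        rw [hwn k hk.le, hwn (k+1) hk]
      · refine Finset.sum_congr rfl fun k hk => ?_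
        rw [hwz k, show n + k + 1 = n + (k + 1) from rfl, hwz (k+1)]
    calc chainDist ε p q ≤ chainLengthOf (fun a b => edist a b) w (n + m) :=
          iInf_le_of_le (n+m) (iInf_le_of_le w (iInf_le_of_le hchain le_rfl))
      _ = _ := hlen
  rcases eq_or_ne (chainDist ε p r) ⊤ with h1 | h1
  · simp [h1]
  rcases eq_or_ne (chainDist ε r q) ⊤ with h2 | h2
  · simp [h2]
  refine ENNReal.le_of_forall_pos_le_add fun δ hδ _ => ?_
  have hδ2 : (0 : ℝ≥0∞) < δ / 2 := by
    simp [ENNReal.div_pos_iff, hδ.ne']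
  have e1 : chainDist ε p r < chainDist ε p r + δ / 2 :=
    ENNReal.lt_add_right h1 hδ2.ne'
  have e2 : chainDist ε r q < chainDist ε r q + δ / 2 :=
    ENNReal.lt_add_right h2 hδ2.ne'
  rw [chainDist, chainDistOf] at e1 e2
  simp only [iInf_lt_iff] at e1 e2
  obtain ⟨n, y, hy, hylen⟩ := e1
  obtain ⟨m, z, hz, hzlen⟩ := e2
  calc chainDist ε p q ≤ _ + _ := key n y hy m z hz
    _ ≤ (chainDist ε p r + δ / 2) + (chainDist ε r q + δ / 2) :=
        add_le_add hylen.le hzlen.le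
    _ = chainDist ε p r + chainDist ε r q + (δ : ℝ≥0∞) := by
        rw [add_add_add_comm, ENNReal.add_halves]

lemma edist_le_chainMetric {Y : Type*} [PseudoEMetricSpace Y] (p q : Y) : edist p q ≤ chainMetric p q :=
  le_trans (edist_le_chainDist 1 p q) (le_iSup₂_of_le 1 one_pos le_rfl)

lemma chainDist_le_chainMetric {Y : Type*} [PseudoEMetricSpace Y] {ε : ℝ≥0∞} (hε : 0 < ε) (p q : Y) :
    chainDist ε p q ≤ chainMetric p q :=
  le_iSup₂_of_le ε hε le_rfl

/-- if `(X,d)` is complete, then `(X,d_0)` is complete: every `d_0`-Cauchy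
sequence `d_0`-converges to a point of `X`. -/
theorem chainMetric_complete {X : Type*} [MetricSpace X] [CompleteSpace X] (x : ℕ → X)
    (hx : ∀ ε : ℝ≥0∞, 0 < ε → ∃ n₀ : ℕ, ∀ i ≥ n₀, ∀ j ≥ n₀, chainMetric (x i) (x j) ≤ ε) :
    ∃ l : X, Tendsto (fun n => chainMetric (x n) l) atTop (nhds 0) := by
  have hcauchy : CauchySeq x := by
    rw [EMetric.cauchySeq_iff]
    intro ε hε
    have hpos : (0 : ℝ≥0∞) < min 1 ε / 2 := by
      simp [ENNReal.div_pos_iff, hε.ne', (lt_min one_pos hε).ne']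
    obtain ⟨N, hN⟩ := hx (min 1 ε / 2) hpos
    refine ⟨N, fun m hm n hn => ?_⟩
    calc edist (x m) (x n) ≤ chainMetric (x m) (x n) := edist_le_chainMetric _ _
      _ ≤ min 1 ε / 2 := hN m hm n hn
      _ < min 1 ε := ENNReal.half_lt_self (lt_min one_pos hε).ne'
          (lt_of_le_of_lt (min_le_left _ _) ENNReal.one_lt_top).ne
      _ ≤ ε := min_le_right _ _
  obtain ⟨l, hl⟩ := cauchySeq_tendsto_of_complete hcauchy
  refine ⟨l, ENNReal.tendsto_atTop_zero.2 fun ε hε => ?_⟩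
  have hε2 : (0 : ℝ≥0∞) < ε / 2 := by simp [ENNReal.div_pos_iff, hε.ne']
  obtain ⟨n₀, hn₀⟩ := hx (ε / 2) hε2
  refine ⟨n₀, fun n hn => ?_⟩
  refine iSup₂_le fun δ hδ => ?_
  -- pick j ≥ n₀ with edist (x j) l ≤ min δ (ε/2)
  have hmin : (0 : ℝ≥0∞) < min δ (ε / 2) := lt_min hδ hε2
  obtain ⟨N, hN⟩ := EMetric.tendsto_atTop.1 hl (min δ (ε / 2)) hmin
  set j := max N n₀ with hj
  have hjl : edist (x j) l ≤ min δ (ε / 2) := (hN j (le_max_left _ _)).le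
  calc chainDist δ (x n) l
      ≤ chainDist δ (x n) (x j) + chainDist δ (x j) l := chainDist_triangle δ _ _ _
    _ ≤ chainMetric (x n) (x j) + edist (x j) l := by
        gcongr
        · exact chainDist_le_chainMetric hδ _ _
        · exact chainDist_le_edist (hjl.trans (min_le_left _ _))
    _ ≤ ε / 2 + ε / 2 :=
        add_le_add (hn₀ n hn j (le_max_right _ _)) (hjl.trans (min_le_right _ _))
    _ = ε := ENNReal.add_halves ε
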